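/- Let γ > 1 and ℓ := 2/(γ−1). For every (V₋, C₋) ∈ ℝ² with 0 < −(1+V₋) < C₋, there exists a unique (V₊, C₊) ∈ ℝ² with 0 < C₊ < −(1+V₊) such that the pair satisfies the self-similar Rankine–Hugoniot relations. Conversely, for every (V₊, C₊) with 0 < C₊ < −(1+V₊) there exists a unique (V₋, C₋) with 0 < −(1+V₋) < C₋ such that the pair satisfies the self-similar Rankine–Hugoniot relations. (These are admissible self-similar 2-shocks in the case ξ̄/λ < 0, with left states in T²₋ := {0 < −(1+V) < C} and right states in T²₊ := {0 < C < −(1+V)}.) -/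

import Mathlib

/-- The self-similar Rankine–Hugoniot relations for the 1-d isentropic Euler
system (with `ℓ = 2/(γ−1)`), relating a left state `Pm = (V₋, C₋)` and a right
state `Pp = (V₊, C₊)`. -/
def RH (γ : ℝ) (Pm Pp : ℝ × ℝ) : Prop :=
  |Pm.2| ^ (2 / (γ - 1)) * (1 + Pm.1) = |Pp.2| ^ (2 / (γ - 1)) * (1 + Pp.1) ∧
  |Pm.2| ^ (2 / (γ - 1)) * ((1 + Pm.1) ^ 2 + Pm.2 ^ 2 / γ)
    = |Pp.2| ^ (2 / (γ - 1)) * ((1 + Pp.1) ^ 2 + Pp.2 ^ 2 / γ)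

open Real Set


noncomputable def gg (γ L m c : ℝ) : ℝ := m ^ 2 * c ^ (-L) + c ^ (L + 2) / γ

lemma gg_pos {γ L m : ℝ} (hγ : 0 < γ) (hm : 0 < m) {c : ℝ} (hc : 0 < c) :
    0 < gg γ L m c := by
  have h1 : (0:ℝ) < m ^ 2 * c ^ (-L) :=
    mul_pos (pow_pos hm 2) (Real.rpow_pos_of_pos hc _)
  have h2 : (0:ℝ) < c ^ (L + 2) / γ := div_pos (Real.rpow_pos_of_pos hc _) hγ
  exact add_pos h1 h2

lemma hasDerivAt_gg (γ L m : ℝ) {c : ℝ} (hc : 0 < c) :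
    HasDerivAt (gg γ L m) (m ^ 2 * (-L * c ^ (-L - 1)) + (L + 2) * c ^ (L + 1) / γ) c := by
  have h1 : HasDerivAt (fun x : ℝ => x ^ (- L)) (-L * c ^ (-L - 1)) c :=
    Real.hasDerivAt_rpow_const (Or.inl hc.ne')
  have h2 : HasDerivAt (fun x : ℝ => x ^ (L + 2)) ((L + 2) * c ^ (L + 2 - 1)) c :=
    Real.hasDerivAt_rpow_const (Or.inl hc.ne')
  have h3 := (h1.const_mul (m ^ 2)).add (h2.div_const γ)
  have e : L + 2 - 1 = L + 1 := by ring
  rw [e] at h3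
  exact h3

lemma cs_rpow {L m : ℝ} (hm : 0 < m) (hL1 : L + 1 ≠ 0) :
    (m ^ (L + 1)⁻¹) ^ (L + 1) = m := by
  rw [← Real.rpow_mul hm.le, inv_mul_cancel₀ hL1, Real.rpow_one]

lemma lt_cs_iff {L m : ℝ} (hm : 0 < m) (hL1 : 0 < L + 1) {c : ℝ} (hc : 0 ≤ c) :
    c < m ^ (L + 1)⁻¹ ↔ c ^ (L + 1) < m := by
  rw [← Real.rpow_lt_rpow_iff hc (Real.rpow_pos_of_pos hm _).le hL1, cs_rpow hm hL1.ne']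

lemma cs_lt_iff {L m : ℝ} (hm : 0 < m) (hL1 : 0 < L + 1) {c : ℝ} (hc : 0 ≤ c) :
    m ^ (L + 1)⁻¹ < c ↔ m < c ^ (L + 1) := by
  rw [← Real.rpow_lt_rpow_iff (Real.rpow_pos_of_pos hm _).le hc hL1, cs_rpow hm hL1.ne']

lemma deriv_gg_eq {γ L m : ℝ} (hγ : 0 < γ) (hid : L + 2 = γ * L) {c : ℝ} (hc : 0 < c) :
    deriv (gg γ L m) c = L * (c ^ (L + 1) - m ^ 2 * (c ^ (L + 1))⁻¹) := by
  rw [(hasDerivAt_gg γ L m hc).deriv]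
  have e : -L - 1 = -(L + 1) := by ring
  rw [e, Real.rpow_neg hc.le, hid]
  field_simp
  ring

lemma deriv_gg_neg {γ L m : ℝ} (hγ : 0 < γ) (hL : 0 < L) (hid : L + 2 = γ * L)
    (hm : 0 < m) {c : ℝ} (hc : 0 < c) (h : c ^ (L + 1) < m) :
    deriv (gg γ L m) c < 0 := by
  rw [deriv_gg_eq hγ hid hc]
  have hA : 0 < c ^ (L + 1) := Real.rpow_pos_of_pos hc _
  have h3 : c ^ (L + 1) * c ^ (L + 1) < m ^ 2 := by nlinarith
  have h4 := (lt_div_iff₀ hA).mpr h3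
  rw [div_eq_mul_inv] at h4
  exact mul_neg_of_pos_of_neg hL (by linarith)

lemma deriv_gg_pos {γ L m : ℝ} (hγ : 0 < γ) (hL : 0 < L) (hid : L + 2 = γ * L)
    (hm : 0 < m) {c : ℝ} (hc : 0 < c) (h : m < c ^ (L + 1)) :
    0 < deriv (gg γ L m) c := by
  rw [deriv_gg_eq hγ hid hc]
  have hA : 0 < c ^ (L + 1) := Real.rpow_pos_of_pos hc _
  have h3 : m ^ 2 < c ^ (L + 1) * c ^ (L + 1) := by nlinarith
  have h4 := (div_lt_iff₀ hA).mpr h3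
  rw [div_eq_mul_inv] at h4
  exact mul_pos hL (by linarith)

lemma contOn_gg (γ L m : ℝ) {s : Set ℝ} (hs : s ⊆ Ioi 0) : ContinuousOn (gg γ L m) s :=
  fun c hcs => ((hasDerivAt_gg γ L m (hs hcs)).continuousAt).continuousWithinAt

lemma strictAntiOn_gg {γ L m : ℝ} (hγ : 0 < γ) (hL : 0 < L) (hid : L + 2 = γ * L)
    (hm : 0 < m) : StrictAntiOn (gg γ L m) (Ioc 0 (m ^ (L + 1)⁻¹)) := by
  have hL1 : (0:ℝ) < L + 1 := by linarith
  apply strictAntiOn_of_deriv_neg (convex_Ioc _ _)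
    (contOn_gg γ L m (fun x hx => hx.1))
  intro x hx
  rw [interior_Ioc] at hx
  exact deriv_gg_neg hγ hL hid hm hx.1 ((lt_cs_iff hm hL1 hx.1.le).mp hx.2)

lemma strictMonoOn_gg {γ L m : ℝ} (hγ : 0 < γ) (hL : 0 < L) (hid : L + 2 = γ * L)
    (hm : 0 < m) : StrictMonoOn (gg γ L m) (Ici (m ^ (L + 1)⁻¹)) := by
  have hL1 : (0:ℝ) < L + 1 := by linarith
  have hcs : (0:ℝ) < m ^ (L + 1)⁻¹ := Real.rpow_pos_of_pos hm _
  apply strictMonoOn_of_deriv_pos (convex_Ici _)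
    (contOn_gg γ L m (fun x hx => lt_of_lt_of_le hcs hx))
  intro x hx
  rw [interior_Ici] at hx
  exact deriv_gg_pos hγ hL hid hm (hcs.trans hx) ((cs_lt_iff hm hL1 (hcs.trans hx).le).mp hx)

lemma exists_lt_cs {γ L m : ℝ} (hγ : 0 < γ) (hL : 0 < L) (hid : L + 2 = γ * L)
    (hm : 0 < m) {b : ℝ} (hb : m ^ (L + 1)⁻¹ < b) :
    ∃ c, 0 < c ∧ c < m ^ (L + 1)⁻¹ ∧ gg γ L m c = gg γ L m b := by
  set cs := m ^ (L + 1)⁻¹ with hcs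
  have hcs0 : 0 < cs := Real.rpow_pos_of_pos hm _
  have hb0 : 0 < b := hcs0.trans hb
  have hgb0 : 0 < gg γ L m b := gg_pos hγ hm hb0
  have hgcsb : gg γ L m cs < gg γ L m b :=
    strictMonoOn_gg hγ hL hid hm (self_mem_Ici) hb.le hb
  set a := min (cs / 2) ((m ^ 2 / gg γ L m b) ^ L⁻¹) with ha
  have hX0 : 0 < m ^ 2 / gg γ L m b := div_pos (pow_pos hm 2) hgb0
  have ha0 : 0 < a := lt_min (by linarith) (Real.rpow_pos_of_pos hX0 _)
  have hacs : a < cs := (min_le_left _ _).trans_lt (by linarith)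
  have haL : 0 < a ^ L := Real.rpow_pos_of_pos ha0 _
  have h5 : a ^ L ≤ m ^ 2 / gg γ L m b := by
    calc a ^ L ≤ ((m ^ 2 / gg γ L m b) ^ L⁻¹) ^ L :=
          Real.rpow_le_rpow ha0.le (min_le_right _ _) hL.le
      _ = m ^ 2 / gg γ L m b := by
          rw [← Real.rpow_mul hX0.le, inv_mul_cancel₀ hL.ne', Real.rpow_one]
  have h7 : a ^ L * gg γ L m b ≤ m ^ 2 := (le_div_iff₀ hgb0).mp h5
  have h8 : gg γ L m b ≤ m ^ 2 * (a ^ L)⁻¹ := by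
    rw [← div_eq_mul_inv, le_div_iff₀ haL]
    linarith [h7, mul_comm (a ^ L) (gg γ L m b)]
  have key : gg γ L m b < gg γ L m a := by
    have hterm : 0 < a ^ (L + 2) / γ := div_pos (Real.rpow_pos_of_pos ha0 _) hγ
    have hnegL : a ^ (-L) = (a ^ L)⁻¹ := Real.rpow_neg ha0.le L
    calc gg γ L m b ≤ m ^ 2 * (a ^ L)⁻¹ := h8
      _ < m ^ 2 * (a ^ L)⁻¹ + a ^ (L + 2) / γ := by linarith
      _ = gg γ L m a := by rw [gg, hnegL]
  have hsub : Icc a cs ⊆ Ioi 0 := fun x hx => lt_of_lt_of_le ha0 hx.1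
  have hIVT := intermediate_value_Icc' hacs.le (contOn_gg γ L m hsub)
  obtain ⟨c, hcI, hgc⟩ := hIVT ⟨hgcsb.le, key.le⟩
  refine ⟨c, lt_of_lt_of_le ha0 hcI.1, ?_, hgc⟩
  refine lt_of_le_of_ne hcI.2 (fun h => ?_)
  rw [h] at hgc
  exact hgcsb.ne hgc

lemma exists_gt_cs {γ L m : ℝ} (hγ : 0 < γ) (hL : 0 < L) (hid : L + 2 = γ * L)
    (hm : 0 < m) {a : ℝ} (ha0 : 0 < a) (ha : a < m ^ (L + 1)⁻¹) :
    ∃ b, m ^ (L + 1)⁻¹ < b ∧ gg γ L m b = gg γ L m a := by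
  set cs := m ^ (L + 1)⁻¹ with hcs
  have hcs0 : 0 < cs := Real.rpow_pos_of_pos hm _
  have hga0 : 0 < gg γ L m a := gg_pos hγ hm ha0
  have hgacs : gg γ L m cs < gg γ L m a :=
    strictAntiOn_gg hγ hL hid hm ⟨ha0, ha.le⟩ ⟨hcs0, le_refl _⟩ ha
  set b := max (cs + 1) ((γ * gg γ L m a) ^ (L + 2)⁻¹) with hbdef
  have hb : cs < b := lt_of_lt_of_le (lt_add_one cs) (le_max_left _ _)
  have hb0 : 0 < b := hcs0.trans hb
  have hL2 : (0:ℝ) < L + 2 := by linarith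
  have hY0 : 0 < γ * gg γ L m a := mul_pos hγ hga0
  have h5 : γ * gg γ L m a ≤ b ^ (L + 2) := by
    calc γ * gg γ L m a = ((γ * gg γ L m a) ^ (L + 2)⁻¹) ^ (L + 2) := by
          rw [← Real.rpow_mul hY0.le, inv_mul_cancel₀ hL2.ne', Real.rpow_one]
      _ ≤ b ^ (L + 2) :=
          Real.rpow_le_rpow (Real.rpow_pos_of_pos hY0 _).le (le_max_right _ _) hL2.le
  have h6 : gg γ L m a ≤ b ^ (L + 2) / γ := (le_div_iff₀ hγ).mpr (by linarith)
  have key : gg γ L m a < gg γ L m b := by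
    have hterm : 0 < m ^ 2 * b ^ (-L) :=
      mul_pos (pow_pos hm 2) (Real.rpow_pos_of_pos hb0 _)
    calc gg γ L m a ≤ b ^ (L + 2) / γ := h6
      _ < m ^ 2 * b ^ (-L) + b ^ (L + 2) / γ := by linarith
      _ = gg γ L m b := rfl
  have hsub : Icc cs b ⊆ Ioi 0 := fun x hx => lt_of_lt_of_le hcs0 hx.1
  have hIVT := intermediate_value_Icc hb.le (contOn_gg γ L m hsub)
  obtain ⟨c, hcI, hgc⟩ := hIVT ⟨hgacs.le, key.le⟩
  refine ⟨c, ?_, hgc⟩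
  refine lt_of_le_of_ne hcI.1 (fun h => ?_)
  rw [← h] at hgc
  exact hgacs.ne hgc

lemma rh_term (γ : ℝ) {L c u m : ℝ} (hc : 0 < c) (hcu : c ^ L * u = m) :
    c ^ L * (u ^ 2 + c ^ 2 / γ) = gg γ L m c := by
  have hinv : c ^ L * c ^ (-L) = 1 := by
    rw [← Real.rpow_add hc]; simp
  have h3 : c ^ L * c ^ 2 = c ^ (L + 2) := by
    rw [← Real.rpow_natCast c 2, ← Real.rpow_add hc]; norm_num
  have key : m ^ 2 * c ^ (-L) = c ^ L * u ^ 2 := by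
    rw [← hcu]
    have : (c ^ L * u) ^ 2 * c ^ (-L) = (c ^ L * c ^ (-L)) * (c ^ L * u ^ 2) := by ring
    rw [this, hinv, one_mul]
  rw [gg, key, ← h3]; ring

lemma solveV {L m C V : ℝ} (hC : 0 < C) :
    C ^ L * (1 + V) = -m ↔ V = -1 - m * C ^ (-L) := by
  have hCL : 0 < C ^ L := Real.rpow_pos_of_pos hC _
  have hinv : C ^ L * C ^ (-L) = 1 := by rw [← Real.rpow_add hC]; simp
  constructor
  · intro h
    have h2 : (1 + V) * (C ^ L * C ^ (-L)) = -m * C ^ (-L) := by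
      rw [show (1 + V) * (C ^ L * C ^ (-L)) = (C ^ L * (1 + V)) * C ^ (-L) by ring, h]
    rw [hinv, mul_one] at h2
    linarith [h2]
  · intro h
    subst h
    have e : C ^ L * (1 + (-1 - m * C ^ (-L))) = -(m * (C ^ L * C ^ (-L))) := by ring
    rw [e, hinv, mul_one]

lemma lt_flux_iff {L m C : ℝ} (hC : 0 < C) : C < m * C ^ (-L) ↔ C ^ (L + 1) < m := by
  have hCL : 0 < C ^ L := Real.rpow_pos_of_pos hC _
  have e1 : C * C ^ L = C ^ (L + 1) := by
    rw [Real.rpow_add hC, Real.rpow_one]; ring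
  have e2 : m * C ^ (-L) * C ^ L = m := by
    rw [mul_assoc, ← Real.rpow_add hC]; simp
  rw [← mul_lt_mul_iff_left₀ hCL, e1, e2]

lemma flux_lt_iff {L m C : ℝ} (hC : 0 < C) : m * C ^ (-L) < C ↔ m < C ^ (L + 1) := by
  have hCL : 0 < C ^ L := Real.rpow_pos_of_pos hC _
  have e1 : C * C ^ L = C ^ (L + 1) := by
    rw [Real.rpow_add hC, Real.rpow_one]; ring
  have e2 : m * C ^ (-L) * C ^ L = m := by
    rw [mul_assoc, ← Real.rpow_add hC]; simp
  rw [← mul_lt_mul_iff_left₀ hCL, e1, e2]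

lemma rh2_eq (γ : ℝ) {L C V m : ℝ} (hC : 0 < C) (h1 : C ^ L * (1 + V) = -m) :
    C ^ L * ((1 + V) ^ 2 + C ^ 2 / γ) = gg γ L m C := by
  have h : C ^ L * (-(1 + V)) = m := by linear_combination -h1
  rw [← neg_sq (1 + V)]
  exact rh_term γ hC h


/-- admissible self-similar 2-shocks with `ξ̄/λ < 0`: each left
state in `T²₋ = {0 < −(1+V) < C}` has a unique right state in
`T²₊ = {0 < C < −(1+V)}` satisfying the Rankine–Hugoniot relations, and
conversely. -/
theorem stmt_17 (γ : ℝ) (hγ : 1 < γ) :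
    (∀ Vm Cm : ℝ, 0 < -(1 + Vm) → -(1 + Vm) < Cm →
      ∃! Pp : ℝ × ℝ, (0 < Pp.2 ∧ Pp.2 < -(1 + Pp.1)) ∧ RH γ (Vm, Cm) Pp) ∧
    (∀ Vp Cp : ℝ, 0 < Cp → Cp < -(1 + Vp) →
      ∃! Pm : ℝ × ℝ, (0 < -(1 + Pm.1) ∧ -(1 + Pm.1) < Pm.2) ∧ RH γ Pm (Vp, Cp)) := by
  have hγ0 : 0 < γ := by linarith
  set L := 2 / (γ - 1) with hLdef
  have hL : 0 < L := div_pos two_pos (by linarith)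
  have hid : L + 2 = γ * L := by
    have hne : γ - 1 ≠ 0 := sub_ne_zero_of_ne (ne_of_gt hγ)
    rw [hLdef]
    field_simp
    ring
  have hL1 : (0:ℝ) < L + 1 := by linarith
  constructor
  · intro Vm Cm hu hlt
    have hCm : 0 < Cm := hu.trans hlt
    set m := Cm ^ L * -(1 + Vm) with hmdef
    have hm : 0 < m := mul_pos (Real.rpow_pos_of_pos hCm _) hu
    have hm1 : Cm ^ L * (1 + Vm) = -m := by rw [hmdef]; ring
    have hCmcs : m ^ (L + 1)⁻¹ < Cm := by
      rw [cs_lt_iff hm hL1 hCm.le, Real.rpow_add hCm, Real.rpow_one, hmdef]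
      exact mul_lt_mul_of_pos_left hlt (Real.rpow_pos_of_pos hCm _)
    obtain ⟨c, hc0, hccs, hgc⟩ := exists_lt_cs hγ0 hL hid hm hCmcs
    have hclt : c ^ (L + 1) < m := (lt_cs_iff hm hL1 hc0.le).mp hccs
    refine ⟨(-1 - m * c ^ (-L), c), ⟨⟨hc0, ?_⟩, ?_⟩, ?_⟩
    · have h := (lt_flux_iff hc0).mpr hclt
      show c < -(1 + (-1 - m * c ^ (-L)))
      linarith
    · constructor
      · show |Cm| ^ (2 / (γ - 1)) * (1 + Vm) = |c| ^ (2 / (γ - 1)) * (1 + (-1 - m * c ^ (-L)))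
        rw [abs_of_pos hCm, abs_of_pos hc0, ← hLdef, hm1, (solveV hc0).mpr rfl]
      · show |Cm| ^ (2 / (γ - 1)) * ((1 + Vm) ^ 2 + Cm ^ 2 / γ)
          = |c| ^ (2 / (γ - 1)) * ((1 + (-1 - m * c ^ (-L))) ^ 2 + c ^ 2 / γ)
        rw [abs_of_pos hCm, abs_of_pos hc0, ← hLdef, rh2_eq γ hCm hm1,
          rh2_eq γ hc0 ((solveV hc0).mpr rfl)]
        exact hgc.symm
    · rintro ⟨V', C'⟩ ⟨⟨hC'0, hC'lt⟩, hRH⟩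
      obtain ⟨h1, h2⟩ := hRH
      simp only at h1 h2
      rw [abs_of_pos hCm, abs_of_pos hC'0, ← hLdef] at h1 h2
      have hm1' : C' ^ L * (1 + V') = -m := by rw [← h1]; exact hm1
      have hV' : V' = -1 - m * C' ^ (-L) := (solveV hC'0).mp hm1'
      have hC'cs : C' < m ^ (L + 1)⁻¹ := by
        rw [lt_cs_iff hm hL1 hC'0.le]
        have h3 : C' < -(1 + V') := hC'lt
        rw [hV'] at h3
        exact (lt_flux_iff hC'0).mp (by linarith)
      have hgg : gg γ L m C' = gg γ L m Cm := by
        rw [← rh2_eq γ hC'0 hm1', ← rh2_eq γ hCm hm1]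
        exact h2.symm
      have hC'c : C' = c :=
        (strictAntiOn_gg hγ0 hL hid hm).injOn ⟨hC'0, hC'cs.le⟩ ⟨hc0, hccs.le⟩
          (by rw [hgg, ← hgc])
      have hV'' : V' = -1 - m * c ^ (-L) := by rw [hV', hC'c]
      exact Prod.ext hV'' hC'c
  · intro Vp Cp hCp hlt
    have hup : 0 < -(1 + Vp) := hCp.trans hlt
    set m := Cp ^ L * -(1 + Vp) with hmdef
    have hm : 0 < m := mul_pos (Real.rpow_pos_of_pos hCp _) hup
    have hp1 : Cp ^ L * (1 + Vp) = -m := by rw [hmdef]; ring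
    have hCpcs : Cp < m ^ (L + 1)⁻¹ := by
      rw [lt_cs_iff hm hL1 hCp.le, Real.rpow_add hCp, Real.rpow_one, hmdef]
      exact mul_lt_mul_of_pos_left hlt (Real.rpow_pos_of_pos hCp _)
    obtain ⟨b, hbcs, hgb⟩ := exists_gt_cs hγ0 hL hid hm hCp hCpcs
    have hb0 : 0 < b := (Real.rpow_pos_of_pos hm _).trans hbcs
    have hbm : m < b ^ (L + 1) := (cs_lt_iff hm hL1 hb0.le).mp hbcs
    refine ⟨(-1 - m * b ^ (-L), b), ⟨⟨?_, ?_⟩, ?_⟩, ?_⟩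
    · have := mul_pos hm (Real.rpow_pos_of_pos hb0 (-L))
      show 0 < -(1 + (-1 - m * b ^ (-L)))
      linarith
    · have h := (flux_lt_iff hb0).mpr hbm
      show -(1 + (-1 - m * b ^ (-L))) < b
      linarith
    · constructor
      · show |b| ^ (2 / (γ - 1)) * (1 + (-1 - m * b ^ (-L))) = |Cp| ^ (2 / (γ - 1)) * (1 + Vp)
        rw [abs_of_pos hCp, abs_of_pos hb0, ← hLdef, hp1, (solveV hb0).mpr rfl]
      · show |b| ^ (2 / (γ - 1)) * ((1 + (-1 - m * b ^ (-L))) ^ 2 + b ^ 2 / γ)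
          = |Cp| ^ (2 / (γ - 1)) * ((1 + Vp) ^ 2 + Cp ^ 2 / γ)
        rw [abs_of_pos hCp, abs_of_pos hb0, ← hLdef, rh2_eq γ hCp hp1,
          rh2_eq γ hb0 ((solveV hb0).mpr rfl)]
        exact hgb
    · rintro ⟨V', C'⟩ ⟨⟨hu'0, hu'lt⟩, hRH⟩
      have hC'0 : 0 < C' := hu'0.trans hu'lt
      obtain ⟨h1, h2⟩ := hRH
      simp only at h1 h2
      rw [abs_of_pos hCp, abs_of_pos hC'0, ← hLdef] at h1 h2
      have hm1' : C' ^ L * (1 + V') = -m := h1.trans hp1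
      have hV' : V' = -1 - m * C' ^ (-L) := (solveV hC'0).mp hm1'
      have hcs' : m ^ (L + 1)⁻¹ < C' := by
        rw [cs_lt_iff hm hL1 hC'0.le]
        have h3 : -(1 + V') < C' := hu'lt
        rw [hV'] at h3
        exact (flux_lt_iff hC'0).mp (by linarith)
      have hgg : gg γ L m C' = gg γ L m Cp := by
        rw [← rh2_eq γ hC'0 hm1', ← rh2_eq γ hCp hp1]
        exact h2
      have hC'b : C' = b :=
        (strictMonoOn_gg hγ0 hL hid hm).injOn hcs'.le hbcs.le (by rw [hgg, ← hgb])
      have hV'' : V' = -1 - m * b ^ (-L) := by rw [hV', hC'b]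
      exact Prod.ext hV'' hC'b
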